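/- arXiv:1109.5790 — 2 statements merged into one kernel-verified Lean document; each statement's English description precedes it below -/
import Mathlib

section
/- Decodability at the relays: let V₁, V₂ ∈ ℂ^{3×2} be fixed matrices such that any two rows of V₁ form an invertible 2×2 matrix and likewise for V₂, and let the first-hop channel coefficients H_{ij}(t), i,j ∈ {1,2}, t ∈ {1,2,3}, be i.i.d. standard complex Gaussians. Define Y₁(t) = H₁₁(t)·V₁ₜ·u + H₁₂(t)·V₂ₜ·v for t = 1,2,3 and Y₂(3) = H₂₁(3)·V₁₃·u + H₂₂(3)·V₂₃·v, where V_{iₜ} denotes row t of V_i and u, v ∈ ℂ² are unknown. Then with probability 1, the 4×4 matrix sending (u, v) to (Y₁(1), Y₁(2), Y₁(3), Y₂(3)) is invertible, so relay 1 can recover u and v. -/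
open MeasureTheory ProbabilityTheory

lemma key_lemma {Ω : Type*} [MeasureSpace Ω] [IsProbabilityMeasure (ℙ : Measure Ω)]
    (W : Ω → ℂ × ℂ × ℂ) (Z : Ω → ℂ) (hW : Measurable W) (hZ : Measurable Z)
    (hind : IndepFun W Z ℙ) (hZac : Measure.map Z ℙ ≪ (volume : Measure ℂ))
    (f g : ℂ × ℂ × ℂ → ℂ) (hf : Measurable f) (hg : Measurable g)
    (hfne : ℙ {ω | f (W ω) = 0} = 0) :
    ℙ {ω | f (W ω) * Z ω = g (W ω)} = 0 := by
  set s : Set ((ℂ × ℂ × ℂ) × ℂ) := {p | f p.1 * p.2 = g p.1} with hs_def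
  have hs : MeasurableSet s :=
    measurableSet_eq_fun ((hf.comp measurable_fst).mul measurable_snd) (hg.comp measurable_fst)
  have hmap : Measure.map (fun ω => (W ω, Z ω)) ℙ
      = (Measure.map W ℙ).prod (Measure.map Z ℙ) :=
    (indepFun_iff_map_prod_eq_prod_map_map hW.aemeasurable hZ.aemeasurable).mp hind
  have heq : ℙ {ω | f (W ω) * Z ω = g (W ω)}
      = ((Measure.map W ℙ).prod (Measure.map Z ℙ)) s := by
    rw [← hmap, Measure.map_apply (hW.prodMk hZ) hs]
    rfl
  rw [heq, Measure.measure_prod_null hs]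
  have hfW : ∀ᵐ w ∂(Measure.map W ℙ), f w ≠ 0 := by
    rw [ae_iff]
    have h0 : Measure.map W ℙ {w | f w = 0} = 0 := by
      rw [Measure.map_apply hW (measurableSet_eq_fun hf measurable_const)]
      exact hfne
    simpa using h0
  filter_upwards [hfW] with w hw
  have hpre : Prod.mk w ⁻¹' s = {g w / f w} := by
    ext z
    simp only [Set.mem_preimage, hs_def, Set.mem_setOf_eq, Set.mem_singleton_iff]
    rw [eq_div_iff hw, mul_comm]
  show Measure.map Z ℙ (Prod.mk w ⁻¹' s) = 0
  rw [hpre]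
  exact hZac (measure_singleton _)

lemma indep_triple {Ω : Type*} [MeasureSpace Ω] [IsProbabilityMeasure (ℙ : Measure Ω)]
    (X : Fin 8 → Ω → ℂ) (hmeas : ∀ k, Measurable (X k))
    (hindep : iIndepFun X ℙ)
    (i j l k : Fin 8) (hik : i ≠ k) (hjk : j ≠ k) (hlk : l ≠ k) :
    IndepFun (fun ω => (X i ω, X j ω, X l ω)) (X k) ℙ := by
  classical
  have hd : Disjoint ({i, j, l} : Finset (Fin 8)) {k} := by
    rw [Finset.disjoint_singleton_right]
    simp only [Finset.mem_insert, Finset.mem_singleton]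
    push_neg
    exact ⟨Ne.symm hik, Ne.symm hjk, Ne.symm hlk⟩
  have h := hindep.indepFun_finset {i, j, l} {k} hd hmeas
  have hi : i ∈ ({i, j, l} : Finset (Fin 8)) := by simp
  have hj : j ∈ ({i, j, l} : Finset (Fin 8)) := by simp
  have hl : l ∈ ({i, j, l} : Finset (Fin 8)) := by simp
  have hk : k ∈ ({k} : Finset (Fin 8)) := by simp
  exact h.comp
    (φ := fun v : (x : ({i, j, l} : Finset (Fin 8))) → ℂ => (v ⟨i, hi⟩, v ⟨j, hj⟩, v ⟨l, hl⟩))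
    (ψ := fun v : (x : ({k} : Finset (Fin 8))) → ℂ => v ⟨k, hk⟩)
    (by fun_prop) (by fun_prop)

/-- Decodability at relay 1. With X 0 = H₁₁(1), X 1 = H₁₁(2), X 2 = H₁₁(3),
X 3 = H₁₂(1), X 4 = H₁₂(2), X 5 = H₁₂(3), X 6 = H₂₁(3), X 7 = H₂₂(3) i.i.d.
standard complex Gaussians, and V₁, V₂ ∈ ℂ^{3×2} fixed with nonzero entries and
all 2×2 row-submatrices invertible, the 4×4 matrix sending (u,v) to
(Y₁(1), Y₁(2), Y₁(3), Y₂(3)) is invertible with probability 1. -/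
theorem relay_decoding_matrix_invertible_ae
    {Ω : Type*} [MeasureSpace Ω] [IsProbabilityMeasure (ℙ : Measure Ω)]
    (V₁ V₂ : Matrix (Fin 3) (Fin 2) ℂ)
    (hV₁e : ∀ i j, V₁ i j ≠ 0) (hV₂e : ∀ i j, V₂ i j ≠ 0)
    (hV₁ : ∀ i j : Fin 3, i ≠ j → (Matrix.of ![V₁ i, V₁ j]).det ≠ 0)
    (hV₂ : ∀ i j : Fin 3, i ≠ j → (Matrix.of ![V₂ i, V₂ j]).det ≠ 0)
    (X : Fin 8 → Ω → ℂ)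
    (hmeas : ∀ k, Measurable (X k))
    (hindep : iIndepFun X ℙ)
    (hac : ∀ k, (Measure.map (X k) ℙ) ≪ (volume : Measure ℂ)) :
    ℙ {ω | (!![X 0 ω * V₁ 0 0, X 0 ω * V₁ 0 1, X 3 ω * V₂ 0 0, X 3 ω * V₂ 0 1;
               X 1 ω * V₁ 1 0, X 1 ω * V₁ 1 1, X 4 ω * V₂ 1 0, X 4 ω * V₂ 1 1;
               X 2 ω * V₁ 2 0, X 2 ω * V₁ 2 1, X 5 ω * V₂ 2 0, X 5 ω * V₂ 2 1;
               X 6 ω * V₁ 2 0, X 6 ω * V₁ 2 1, X 7 ω * V₂ 2 0, X 7 ω * V₂ 2 1]).det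
          = 0} = 0 := by
  set c₁ : ℂ := (Matrix.of ![V₁ 1, V₁ 2]).det * (Matrix.of ![V₂ 0, V₂ 2]).det with hc₁_def
  set c₂ : ℂ := (Matrix.of ![V₁ 0, V₁ 2]).det * (Matrix.of ![V₂ 1, V₂ 2]).det with hc₂_def
  have hc₁ : c₁ ≠ 0 := mul_ne_zero (hV₁ 1 2 (by decide)) (hV₂ 0 2 (by decide))
  have hc₂ : c₂ ≠ 0 := mul_ne_zero (hV₁ 0 2 (by decide)) (hV₂ 1 2 (by decide))
  -- determinant factorization
  have hdet : ∀ ω : Ω,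
      (!![X 0 ω * V₁ 0 0, X 0 ω * V₁ 0 1, X 3 ω * V₂ 0 0, X 3 ω * V₂ 0 1;
          X 1 ω * V₁ 1 0, X 1 ω * V₁ 1 1, X 4 ω * V₂ 1 0, X 4 ω * V₂ 1 1;
          X 2 ω * V₁ 2 0, X 2 ω * V₁ 2 1, X 5 ω * V₂ 2 0, X 5 ω * V₂ 2 1;
          X 6 ω * V₁ 2 0, X 6 ω * V₁ 2 1, X 7 ω * V₂ 2 0, X 7 ω * V₂ 2 1]).det
      = (X 2 ω * X 7 ω - X 5 ω * X 6 ω) *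
          (c₁ * (X 1 ω * X 3 ω) - c₂ * (X 0 ω * X 4 ω)) := by
    intro ω
    rw [hc₁_def, hc₂_def]
    simp [Matrix.det_succ_row_zero, Fin.sum_univ_succ, Matrix.det_fin_two, Matrix.of_apply,
      Matrix.cons_val_zero, Matrix.cons_val_one, Matrix.head_cons, Fin.succAbove,
      Matrix.cons_val_succ, Fin.castSucc, Fin.castAdd, Fin.castLE]
    ring
  -- each coordinate is a.s. nonzero
  have hzero : ∀ k, ℙ {ω | X k ω = 0} = 0 := by
    intro k
    have h1 : ℙ (X k ⁻¹' {0}) = Measure.map (X k) ℙ {0} :=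
      (Measure.map_apply (hmeas k) (measurableSet_singleton 0)).symm
    calc ℙ {ω | X k ω = 0} = ℙ (X k ⁻¹' {0}) := rfl
      _ = Measure.map (X k) ℙ {0} := h1
      _ = 0 := hac k (measure_singleton 0)
  -- first factor is a.s. nonzero
  have hE1 : ℙ {ω | X 2 ω * X 7 ω = X 5 ω * X 6 ω} = 0 := by
    have := key_lemma (fun ω => (X 2 ω, X 5 ω, X 6 ω)) (X 7)
      (Measurable.prodMk (hmeas 2) (Measurable.prodMk (hmeas 5) (hmeas 6))) (hmeas 7)
      (indep_triple X hmeas hindep 2 5 6 7 (by decide) (by decide) (by decide))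
      (hac 7) (fun p => p.1) (fun p => p.2.1 * p.2.2) measurable_fst
      (measurable_snd.fst.mul measurable_snd.snd) (hzero 2)
    simpa using this
  -- second factor is a.s. nonzero
  have hE2 : ℙ {ω | c₂ * X 0 ω * X 4 ω = c₁ * (X 1 ω * X 3 ω)} = 0 := by
    have hfne : ℙ {ω | c₂ * X 0 ω = 0} = 0 := by
      have : {ω | c₂ * X 0 ω = 0} = {ω | X 0 ω = 0} := by
        ext ω; simp [mul_eq_zero, hc₂]
      rw [this]; exact hzero 0
    have := key_lemma (fun ω => (X 0 ω, X 1 ω, X 3 ω)) (X 4)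
      (Measurable.prodMk (hmeas 0) (Measurable.prodMk (hmeas 1) (hmeas 3))) (hmeas 4)
      (indep_triple X hmeas hindep 0 1 3 4 (by decide) (by decide) (by decide))
      (hac 4) (fun p => c₂ * p.1) (fun p => c₁ * (p.2.1 * p.2.2))
      (measurable_const.mul measurable_fst)
      (measurable_const.mul (measurable_snd.fst.mul measurable_snd.snd)) hfne
    simpa using this
  -- combine
  refine le_antisymm ?_ zero_le
  calc ℙ {ω | (!![X 0 ω * V₁ 0 0, X 0 ω * V₁ 0 1, X 3 ω * V₂ 0 0, X 3 ω * V₂ 0 1;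
               X 1 ω * V₁ 1 0, X 1 ω * V₁ 1 1, X 4 ω * V₂ 1 0, X 4 ω * V₂ 1 1;
               X 2 ω * V₁ 2 0, X 2 ω * V₁ 2 1, X 5 ω * V₂ 2 0, X 5 ω * V₂ 2 1;
               X 6 ω * V₁ 2 0, X 6 ω * V₁ 2 1, X 7 ω * V₂ 2 0, X 7 ω * V₂ 2 1]).det = 0}
      ≤ ℙ ({ω | X 2 ω * X 7 ω = X 5 ω * X 6 ω}
            ∪ {ω | c₂ * X 0 ω * X 4 ω = c₁ * (X 1 ω * X 3 ω)}) := by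
        apply measure_mono
        intro ω hω
        simp only [Set.mem_setOf_eq] at hω
        rw [hdet ω] at hω
        rcases mul_eq_zero.mp hω with h | h
        · exact Or.inl (sub_eq_zero.mp h)
        · refine Or.inr ?_
          have h' := sub_eq_zero.mp h
          simp only [Set.mem_setOf_eq]
          linear_combination -h'
    _ ≤ ℙ {ω | X 2 ω * X 7 ω = X 5 ω * X 6 ω}
        + ℙ {ω | c₂ * X 0 ω * X 4 ω = c₁ * (X 1 ω * X 3 ω)} := measure_union_le _ _
    _ = 0 := by rw [hE1, hE2, add_zero]
end

section
/- The 4×4 decoding matrix determinant in the limited-Shannon-feedback scheme is a nonzero polynomial in the channel variables: for fixed V₁, V₂ ∈ ℂ^{3×2} with all 2×2 row-submatrices invertible, the determinant of the matrix with rows (h₁V₁₁, h₂V₂₁), (h₃V₁₂, h₄V₂₂), (h₅V₁₃, h₆V₂₃), (h₇V₁₃, h₈V₂₃), viewed as a polynomial in h₁,…,h₈, is not identically zero. -/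
open MvPolynomial

/-- The determinant of the 4×4 decoding matrix in the limited-Shannon-feedback
scheme, viewed as a polynomial in the eight channel variables h₁,…,h₈, is not
identically zero, whenever V₁, V₂ ∈ ℂ^{3×2} have nonzero entries and all their
2×2 row-submatrices are invertible. -/
theorem decoding_det_poly_ne_zero
    (V₁ V₂ : Matrix (Fin 3) (Fin 2) ℂ)
    (hV₁e : ∀ i j, V₁ i j ≠ 0) (hV₂e : ∀ i j, V₂ i j ≠ 0)
    (hV₁ : ∀ i j : Fin 3, i ≠ j → (Matrix.of ![V₁ i, V₁ j]).det ≠ 0)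
    (hV₂ : ∀ i j : Fin 3, i ≠ j → (Matrix.of ![V₂ i, V₂ j]).det ≠ 0) :
    (!![(X 0 : MvPolynomial (Fin 8) ℂ) * C (V₁ 0 0), X 0 * C (V₁ 0 1),
          X 1 * C (V₂ 0 0), X 1 * C (V₂ 0 1);
        X 2 * C (V₁ 1 0), X 2 * C (V₁ 1 1), X 3 * C (V₂ 1 0), X 3 * C (V₂ 1 1);
        X 4 * C (V₁ 2 0), X 4 * C (V₁ 2 1), X 5 * C (V₂ 2 0), X 5 * C (V₂ 2 1);
        X 6 * C (V₁ 2 0), X 6 * C (V₁ 2 1), X 7 * C (V₂ 2 0), X 7 * C (V₂ 2 1)]).det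
      ≠ 0 := by
  intro h0
  have key := congrArg (MvPolynomial.eval (![1,0,0,1,1,0,0,1] : Fin 8 → ℂ)) h0
  simp [Matrix.det_succ_row_zero, Fin.sum_univ_succ, Fin.succAbove,
    Matrix.cons_val_succ, Matrix.cons_val_zero, Matrix.cons_val_one, Matrix.head_cons,
    Matrix.cons_val_fin_one, show ((7:Fin 8):ℕ)=7 from rfl] at key
  norm_num [Matrix.cons_val_succ] at key
  have e5 : (![1,0,0,1,1,0,0,1] : Fin 8 → ℂ) 5 = 0 := rfl
  have e6 : (![1,0,0,1,1,0,0,1] : Fin 8 → ℂ) 6 = 0 := rfl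
  have e7 : (![1,0,0,1,1,0,0,1] : Fin 8 → ℂ) 7 = 1 := rfl
  have h1 := hV₁ 0 2 (by decide)
  have h2 := hV₂ 1 2 (by decide)
  simp [Matrix.det_fin_two] at h1 h2
  apply mul_ne_zero h1 h2
  linear_combination -key
end
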